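/- Let 𝔯, 𝔯' ⊆ [0,1] ∩ ℚ be finite sets, each containing 0 and 1, such that Φ(𝔯) = Φ(𝔯'). Then for every finite set 𝒩 of positive integers, Γ(𝒩, Φ(𝔯)) = Γ(𝒩, Φ(𝔯')). -/

import Mathlib

open scoped BigOperators

/-- The hyperstandard set `Φ(𝔯) = {1 - r/l | r ∈ 𝔯, l ∈ ℤ_{>0}} ∩ [0,1]` associated to a
set of rationals `𝔯`. -/
def Phi (R : Set ℚ) : Set ℝ :=
  {x : ℝ | (∃ r ∈ R, ∃ l : ℕ, 0 < l ∧ x = 1 - (r : ℝ) / l) ∧ 0 ≤ x ∧ x ≤ 1}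

/-- The set `Γ(𝒩, Φ(𝔯)) = {1 - r/l + (1/l)·Σ_{n∈𝒩} m_n/(n+1)} ∩ [0,1]`. -/
def Gamma (N : Finset ℕ) (R : Set ℚ) : Set ℝ :=
  {x : ℝ | (∃ r ∈ R, ∃ l : ℕ, 0 < l ∧ ∃ m : ℕ → ℕ,
      x = 1 - (r : ℝ) / l + (1 / (l : ℝ)) * ∑ n ∈ N, (m n : ℝ) / ((n : ℝ) + 1)) ∧
    0 ≤ x ∧ x ≤ 1}

/-- If `Φ(𝔯) = Φ(𝔯')`, then `Γ(𝒩, Φ(𝔯)) = Γ(𝒩, Φ(𝔯'))` for every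
finite set `𝒩` of positive integers. -/
lemma gamma_subset_of_phi_subset (R R' : Set ℚ) (hRsub : R ⊆ Set.Icc 0 1)
    (hPhi : Phi R ⊆ Phi R') (N : Finset ℕ) : Gamma N R ⊆ Gamma N R' := by
  rintro x ⟨⟨r, hr, l, hl, m, hx⟩, hx0, hx1⟩
  have hrIcc := hRsub hr
  have h1r : (1 : ℝ) - (r : ℝ) ∈ Phi R := by
    refine ⟨⟨r, hr, 1, one_pos, by norm_num⟩, ?_, ?_⟩
    · have : (r : ℝ) ≤ 1 := by exact_mod_cast hrIcc.2
      linarith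
    · have : (0 : ℝ) ≤ (r : ℝ) := by exact_mod_cast hrIcc.1
      linarith
  obtain ⟨⟨r', hr', l', hl', heq⟩, -, -⟩ := hPhi h1r
  have hl0 : (l : ℝ) ≠ 0 := by positivity
  have hl'0 : (l' : ℝ) ≠ 0 := by positivity
  have hr'eq : (r' : ℝ) = (r : ℝ) * l' := by
    field_simp at heq
    linarith
  refine ⟨⟨r', hr', l * l', Nat.mul_pos hl hl', fun n => l' * m n, ?_⟩, hx0, hx1⟩
  have hsum : ∑ n ∈ N, ((l' * m n : ℕ) : ℝ) / ((n : ℝ) + 1)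
      = (l' : ℝ) * ∑ n ∈ N, (m n : ℝ) / ((n : ℝ) + 1) := by
    rw [Finset.mul_sum]
    refine Finset.sum_congr rfl fun n _ => ?_
    push_cast
    ring
  rw [hx, hsum, hr'eq]
  push_cast
  field_simp

theorem stmt3 (R R' : Set ℚ) (hRfin : R.Finite) (hR'fin : R'.Finite)
    (hRsub : R ⊆ Set.Icc 0 1) (hR'sub : R' ⊆ Set.Icc 0 1)
    (h0R : (0 : ℚ) ∈ R) (h1R : (1 : ℚ) ∈ R) (h0R' : (0 : ℚ) ∈ R') (h1R' : (1 : ℚ) ∈ R')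
    (hPhi : Phi R = Phi R')
    (N : Finset ℕ) (hN : ∀ n ∈ N, 0 < n) :
    Gamma N R = Gamma N R' := by
  apply Set.Subset.antisymm
  · exact gamma_subset_of_phi_subset R R' hRsub hPhi.subset N
  · exact gamma_subset_of_phi_subset R' R hR'sub hPhi.symm.subset N
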